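/- For all holomorphic tangent fields U, V on M one has Tor_∇(U, V̄) = −g([U, V̄], T) · T, i.e. ∇_U V̄ − ∇_{V̄} U − [U, V̄] = −g([U,V̄], T) T. -/

import Mathlib

noncomputable section
open scoped BigOperators

/-- `ℂ^{n+1}`, identified with `ℝ^{2n+2}` via its real structure. -/
abbrev E (n : ℕ) : Type := EuclideanSpace ℂ (Fin (n + 1))

/-- The standard complex structure: multiplication by `i`. -/
def J {n : ℕ} (v : E n) : E n := Complex.I • v

/-- The real inner product `⟨x, y⟩ = Re ⟪x, y⟫`. -/
def rI {n : ℕ} (x y : E n) : ℝ := (inner ℂ x y : ℂ).re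

/-- The (real) tangent space at `p` of a hypersurface with unit normal `ν`. -/
def tangAt {n : ℕ} (ν : E n → E n) (p : E n) : Set (E n) := {X | rI (ν p) X = 0}

/-- `M` is a smooth embedded real hypersurface of `ℂ^{n+1}` (locally a regular zero
set of a smooth real function), oriented by the smooth unit normal field `ν`
(extended smoothly to the ambient space). -/
def IsHypersurface {n : ℕ} (M : Set (E n)) (ν : E n → E n) : Prop :=
  ContDiff ℝ (⊤ : ℕ∞) ν ∧ (∀ p ∈ M, ‖ν p‖ = 1) ∧
    ∀ p ∈ M, ∃ (V : Set (E n)) (F : E n → ℝ), IsOpen V ∧ p ∈ V ∧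
      ContDiffOn ℝ (⊤ : ℕ∞) F V ∧ (M ∩ V = {z ∈ V | F z = 0}) ∧
      ∀ z ∈ M ∩ V, ∀ X : E n, (fderiv ℝ F z X = 0 ↔ X ∈ tangAt ν z)

/-- The horizontal (maximal complex) subspace `H_p = {X ∈ T_pM : JX ∈ T_pM}`. -/
def horizAt {n : ℕ} (ν : E n → E n) (p : E n) : Set (E n) :=
  {X | X ∈ tangAt ν p ∧ J X ∈ tangAt ν p}

/-- The second fundamental form `h(X,Y) = ⟨X, ∂_Y ν⟩`. -/
def sff {n : ℕ} (ν : E n → E n) (p : E n) (X Y : E n) : ℝ :=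
  rI X (fderiv ℝ ν p Y)

/-- The family `X_1, …, X_n, J X_1, …, J X_n`. -/
def combined {n : ℕ} (X : Fin n → E n) : (Fin n ⊕ Fin n) → E n :=
  Sum.elim X (fun α => J (X α))

/-- `{X_1, …, X_n, J X_1, …, J X_n}` is an orthonormal basis of the horizontal
space at `p` (w.r.t. the real inner product). -/
def IsHorizONB {n : ℕ} (ν : E n → E n) (p : E n) (X : Fin n → E n) : Prop :=
  (∀ α, X α ∈ horizAt ν p) ∧
  (∀ i j, rI (combined X i) (combined X j) = if i = j then 1 else 0) ∧
  (∀ Y ∈ horizAt ν p, Y ∈ Submodule.span ℝ (Set.range (combined X)))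

/-! ## Complexified tangent vectors
A complexified vector `X + iY` (the complexification unit `i` is distinct from
the complex structure `J`) is modelled as the pair `(X, Y)`. -/

/-- Complexified vectors of `ℂ^{n+1}`: `(X, Y)` stands for `X + iY`. -/
abbrev CV (n : ℕ) : Type := E n × E n

/-- Conjugation `X + iY ↦ X - iY`. -/
def conjCV {n : ℕ} (v : CV n) : CV n := (v.1, -v.2)

/-- Multiplication of a complexified vector by a complex scalar. -/
def csmul {n : ℕ} (c : ℂ) (v : CV n) : CV n :=
  (c.re • v.1 - c.im • v.2, c.re • v.2 + c.im • v.1)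

/-- `g`, the complex-bilinear extension of the real inner product. -/
def gC {n : ℕ} (v w : CV n) : ℂ :=
  ((rI v.1 w.1 - rI v.2 w.2 : ℝ) : ℂ) + ((rI v.1 w.2 + rI v.2 w.1 : ℝ) : ℂ) * Complex.I

/-- The flat connection `D` of `ℂ^{n+1}` (componentwise directional derivative),
complex-bilinearly extended: `DD V u p = D_u V (p)`. -/
def DD {n : ℕ} (V : E n → CV n) (u : CV n) (p : E n) : CV n :=
  (fderiv ℝ (fun z => (V z).1) p u.1 - fderiv ℝ (fun z => (V z).2) p u.2,
   fderiv ℝ (fun z => (V z).1) p u.2 + fderiv ℝ (fun z => (V z).2) p u.1)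

/-- The Lie bracket `[U,V]` of complexified fields (for the flat ambient space
it is `D_U V - D_V U`). -/
def bracket {n : ℕ} (U V : E n → CV n) (p : E n) : CV n :=
  DD V (U p) p - DD U (V p) p

/-- Derivative `U f` of a complex function along a complexified vector. -/
def dC {n : ℕ} (f : E n → ℂ) (u : CV n) (p : E n) : ℂ :=
  (fderiv ℝ f p u.1) + Complex.I * (fderiv ℝ f p u.2)

/-- The field `T = J(ν)`, viewed as a complexified field. -/
def TF {n : ℕ} (ν : E n → E n) (z : E n) : CV n := (J (ν z), 0)

/-- The holomorphic unit normal `N = (ν - iT)/√2`. -/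
def NF {n : ℕ} (ν : E n → E n) (z : E n) : CV n :=
  ((Real.sqrt 2)⁻¹ • ν z, -((Real.sqrt 2)⁻¹ • J (ν z)))

/-- The complex-bilinear extension of the second fundamental form:
`h(Z, W) = g(Z, D_W ν)`. -/
def hC {n : ℕ} (ν : E n → E n) (p : E n) (v w : CV n) : ℂ :=
  gC v (fderiv ℝ ν p w.1, fderiv ℝ ν p w.2)

/-- Conjugate of a complexified field. -/
def conjF {n : ℕ} (V : E n → CV n) : E n → CV n := fun z => conjCV (V z)

/-- A holomorphic tangent field `Z = X - iJX`, with `X` a smooth real field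
satisfying `⟪X, ν⟫ = 0` (hermitian orthogonality) at every point of `M`. -/
def IsHoloField {n : ℕ} (M : Set (E n)) (ν : E n → E n) (Z : E n → CV n) : Prop :=
  ContDiff ℝ (⊤ : ℕ∞) (fun z => (Z z).1) ∧
  (∀ z, (Z z).2 = -J ((Z z).1)) ∧
  ∀ p ∈ M, (inner ℂ (ν p) ((Z p).1) : ℂ) = 0

/-- A complexified tangent field: a smooth field whose value at every point of
`M` lies in the complexified tangent space `ℂ T_p M`. -/
def IsCTField {n : ℕ} (M : Set (E n)) (ν : E n → E n) (V : E n → CV n) : Prop :=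
  ContDiff ℝ (⊤ : ℕ∞) (fun z => (V z).1) ∧ ContDiff ℝ (⊤ : ℕ∞) (fun z => (V z).2) ∧
  ∀ p ∈ M, rI (ν p) ((V p).1) = 0 ∧ rI (ν p) ((V p).2) = 0

/-- Projection of a real vector onto the real horizontal space (orthogonal
complement of `ν` and `T = Jν`). -/
def horR {n : ℕ} (ν : E n → E n) (z : E n) (x : E n) : E n :=
  x - rI (ν z) x • ν z - rI (J (ν z)) x • J (ν z)

/-- Projection `Π_H` of a complexified tangent vector onto the holomorphic bundle. -/
def PiH {n : ℕ} (ν : E n → E n) (z : E n) (v : CV n) : CV n :=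
  ((2 : ℝ)⁻¹ • (horR ν z v.1 + J (horR ν z v.2)),
   (2 : ℝ)⁻¹ • (horR ν z v.2 - J (horR ν z v.1)))

/-- Projection `Π_H̄` onto the antiholomorphic bundle. -/
def PiHb {n : ℕ} (ν : E n → E n) (z : E n) (v : CV n) : CV n :=
  ((2 : ℝ)⁻¹ • (horR ν z v.1 - J (horR ν z v.2)),
   (2 : ℝ)⁻¹ • (horR ν z v.2 + J (horR ν z v.1)))

/-- The connection `∇`: writing `V = Z + W̄ + fT` with `Z = Π_H V` holomorphic,
`W̄ = Π_H̄ V` antiholomorphic and `f = g(V, T)`, one sets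
`∇_u V = D_u Z - g(D_u Z, N̄) N + D_u W̄ - g(D_u W̄, N) N̄ + (u f) T`. -/
def nabla {n : ℕ} (ν : E n → E n) (V : E n → CV n) (u : CV n) (p : E n) : CV n :=
  (DD (fun z => PiH ν z (V z)) u p
      - csmul (gC (DD (fun z => PiH ν z (V z)) u p) (conjCV (NF ν p))) (NF ν p))
  + (DD (fun z => PiHb ν z (V z)) u p
      - csmul (gC (DD (fun z => PiHb ν z (V z)) u p) (NF ν p)) (conjCV (NF ν p)))
  + csmul (dC (fun z => gC (V z) (TF ν z)) u p) (TF ν p)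

/-- The torsion `Tor_∇(U,V) = ∇_U V - ∇_V U - [U,V]`. -/
def Tor {n : ℕ} (ν : E n → E n) (U V : E n → CV n) (p : E n) : CV n :=
  nabla ν V (U p) p - nabla ν U (V p) p - bracket U V p

/-- The covariant derivative of the second fundamental form:
`∇_Z h (U, W) = Z h(U,W) - h(∇_Z U, W) - h(U, ∇_Z W)`. -/
def nablaHform {n : ℕ} (ν : E n → E n) (Zf U W : E n → CV n) (p : E n) : ℂ :=
  dC (fun z => hC ν z (U z) (W z)) (Zf p) p
    - hC ν p (nabla ν U (Zf p) p) (W p) - hC ν p (U p) (nabla ν W (Zf p) p)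

namespace Aux
variable {n : ℕ}

/-- `J` as a continuous linear map. -/
def Jc (n : ℕ) : E n →L[ℝ] E n :=
  (Complex.I • ContinuousLinearMap.id ℂ (E n)).restrictScalars ℝ

@[simp] lemma Jc_apply (x : E n) : Jc n x = J x := rfl

@[simp] lemma J_J (x : E n) : J (J x) = -x := by
  simp [J, smul_smul, Complex.I_mul_I]

lemma rI_symm (x y : E n) : rI x y = rI y x := by
  rw [rI, rI, ← inner_conj_symm x y, Complex.conj_re]

lemma csmul_inner (x y : E n) : (inner ℂ (J x) (J y) : ℂ) = inner ℂ x y := by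
  rw [J, J, inner_smul_left, inner_smul_right, Complex.conj_I]
  rw [neg_mul, ← mul_assoc, Complex.I_mul_I]; ring

@[simp] lemma rI_J_J (x y : E n) : rI (J x) (J y) = rI x y := by
  rw [rI, rI, csmul_inner]

lemma rI_J_right (x y : E n) : rI x (J y) = - rI (J x) y := by
  rw [rI, rI, J, J, inner_smul_right, inner_smul_left, Complex.conj_I]
  simp only [Complex.mul_re, Complex.I_re, Complex.I_im, Complex.neg_re,
    Complex.neg_im, Complex.mul_im]
  ring

@[simp] lemma rI_self (x : E n) : rI x x = ‖x‖ ^ 2 := by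
  have h := inner_self_eq_norm_sq (𝕜 := ℂ) (x := x)
  rw [RCLike.re_to_complex] at h
  exact h

lemma rI_add_left (x y z : E n) : rI (x + y) z = rI x z + rI y z := by
  rw [rI, rI, rI, inner_add_left, Complex.add_re]

lemma rI_add_right (x y z : E n) : rI x (y + z) = rI x y + rI x z := by
  rw [rI, rI, rI, inner_add_right, Complex.add_re]

lemma rI_smul_left (c : ℝ) (x y : E n) : rI (c • x) y = c * rI x y := by
  rw [rI, rI, ← Complex.coe_smul, inner_smul_left, Complex.conj_ofReal,
    Complex.re_ofReal_mul]

lemma rI_smul_right (c : ℝ) (x y : E n) : rI x (c • y) = c * rI x y := by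
  rw [rI, rI, ← Complex.coe_smul, inner_smul_right, Complex.re_ofReal_mul]

@[simp] lemma rI_neg_left (x y : E n) : rI (-x) y = - rI x y := by
  rw [rI, rI, inner_neg_left, Complex.neg_re]

@[simp] lemma rI_neg_right (x y : E n) : rI x (-y) = - rI x y := by
  rw [rI, rI, inner_neg_right, Complex.neg_re]

@[simp] lemma rI_zero_left (y : E n) : rI 0 y = 0 := by
  rw [rI, inner_zero_left]; rfl
@[simp] lemma rI_zero_right (x : E n) : rI x 0 = 0 := by
  rw [rI, inner_zero_right]; rfl

lemma rI_sub_left (x y z : E n) : rI (x - y) z = rI x z - rI y z := by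
  rw [rI, rI, rI, inner_sub_left, Complex.sub_re]

lemma rI_sub_right (x y z : E n) : rI x (y - z) = rI x y - rI x z := by
  rw [rI, rI, rI, inner_sub_right, Complex.sub_re]

lemma rI_J_left (x y : E n) : rI (J x) y = - rI x (J y) := by
  rw [rI_J_right]; ring

@[simp] lemma J_smul (c : ℝ) (x : E n) : J (c • x) = c • J x := by
  rw [J, J, smul_comm]

@[simp] lemma J_add (x y : E n) : J (x + y) = J x + J y := smul_add _ _ _
@[simp] lemma J_sub (x y : E n) : J (x - y) = J x - J y := smul_sub _ _ _
@[simp] lemma J_neg (x : E n) : J (-x) = - J x := smul_neg _ _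
@[simp] lemma J_zero : J (0 : E n) = 0 := smul_zero _

@[simp] lemma rI_J_self (x : E n) : rI x (J x) = 0 := by
  have h := rI_J_right x x
  rw [rI_symm (J x) x] at h
  linarith

@[simp] lemma rI_J_self' (x : E n) : rI (J x) x = 0 := by
  rw [rI_symm, rI_J_self]

lemma horR_J (ν : E n → E n) (z x : E n) : horR ν z (J x) = J (horR ν z x) := by
  rw [horR, horR]
  rw [rI_J_right (ν z) x, rI_J_J]
  simp only [J_sub, J_smul, J_J]
  module

lemma horR_neg (ν : E n → E n) (z x : E n) : horR ν z (-x) = - horR ν z x := by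
  rw [horR, horR]
  simp only [rI_neg_right]
  module

lemma PiH_anti (ν : E n → E n) (z y : E n) : PiH ν z (y, J y) = 0 := by
  rw [PiH]
  simp only [horR_J, J_J]
  refine Prod.ext ?_ ?_ <;> simp

lemma PiHb_holo (ν : E n → E n) (z x : E n) : PiHb ν z (x, -J x) = 0 := by
  rw [PiHb]
  simp only [horR_neg, horR_J, J_neg, J_J]
  refine Prod.ext ?_ ?_ <;> · simp only [Prod.fst_zero, Prod.snd_zero]; module

lemma PiHb_anti (ν : E n → E n) (z y : E n) :
    PiHb ν z (y, J y) = (horR ν z y, J (horR ν z y)) := by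
  rw [PiHb]
  simp only [horR_neg, horR_J, J_neg, J_J]
  refine Prod.ext ?_ ?_ <;> · dsimp only; module

lemma PiH_holo (ν : E n → E n) (z x : E n) :
    PiH ν z (x, -J x) = (horR ν z x, -J (horR ν z x)) := by
  rw [PiH]
  simp only [horR_neg, horR_J, J_neg, J_J]
  refine Prod.ext ?_ ?_ <;> · dsimp only; module

lemma fderiv_J_apply {f : E n → E n} {p : E n} (hf : DifferentiableAt ℝ f p) (w : E n) :
    fderiv ℝ (fun z => J (f z)) p w = J (fderiv ℝ f p w) := by
  have h : (fun z => J (f z)) = ⇑(Jc n) ∘ f := rfl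
  rw [h, ((Jc n).hasFDerivAt.comp p hf.hasFDerivAt).fderiv]
  rfl

lemma differentiableAt_J {f : E n → E n} {p : E n} (hf : DifferentiableAt ℝ f p) :
    DifferentiableAt ℝ (fun z => J (f z)) p := by
  have h : (fun z => J (f z)) = fun z => Jc n (f z) := rfl
  rw [h]
  exact (Jc n).differentiableAt.comp p hf

lemma fderiv_smul_apply {c : E n → ℝ} {f : E n → E n} {p : E n}
    (hc : DifferentiableAt ℝ c p) (hf : DifferentiableAt ℝ f p) (w : E n) :
    fderiv ℝ (fun z => c z • f z) p w
      = c p • fderiv ℝ f p w + fderiv ℝ c p w • f p := by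
  rw [fderiv_fun_smul hc hf]
  simp

lemma dC_reim {r1 r2 : E n → ℝ} {p : E n} (h1 : DifferentiableAt ℝ r1 p)
    (h2 : DifferentiableAt ℝ r2 p) (w : E n) :
    fderiv ℝ (fun z => (r1 z : ℂ) + (r2 z : ℂ) * Complex.I) p w
      = (fderiv ℝ r1 p w : ℂ) + (fderiv ℝ r2 p w : ℂ) * Complex.I := by
  have hh : HasFDerivAt (fun z => (r1 z : ℂ) + (r2 z : ℂ) * Complex.I)
      ((Complex.ofRealCLM.comp (fderiv ℝ r1 p)) +
        Complex.I • (Complex.ofRealCLM.comp (fderiv ℝ r2 p))) p := by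
    have a1 : HasFDerivAt (fun z => (r1 z : ℂ)) (Complex.ofRealCLM.comp (fderiv ℝ r1 p)) p :=
      Complex.ofRealCLM.hasFDerivAt.comp p h1.hasFDerivAt
    have a2 : HasFDerivAt (fun z => (r2 z : ℂ)) (Complex.ofRealCLM.comp (fderiv ℝ r2 p)) p :=
      Complex.ofRealCLM.hasFDerivAt.comp p h2.hasFDerivAt
    have a3 := a2.mul_const Complex.I
    exact a1.add a3
  rw [hh.fderiv]
  simp [mul_comm]

@[simp] lemma gC_re (v w : CV n) : (gC v w).re = rI v.1 w.1 - rI v.2 w.2 := by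
  simp [gC]

@[simp] lemma gC_im (v w : CV n) : (gC v w).im = rI v.1 w.2 + rI v.2 w.1 := by
  simp [gC]

lemma csmul_eq (c : ℂ) (v : CV n) :
    csmul c v = (c.re • v.1 - c.im • v.2, c.re • v.2 + c.im • v.1) := rfl

@[simp] lemma csmul_zero_right (c : ℂ) : csmul c (0 : CV n) = 0 := by
  simp [csmul_eq, Prod.ext_iff]

@[simp] lemma csmul_zero_left (v : CV n) : csmul 0 v = 0 := by
  simp [csmul_eq, Prod.ext_iff]


/-- derivative of a real inner product of two fields -/
lemma fderiv_rI_apply {f g : E n → E n} {p : E n} (hf : DifferentiableAt ℝ f p)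
    (hg : DifferentiableAt ℝ g p) (w : E n) :
    fderiv ℝ (fun z => rI (f z) (g z)) p w
      = rI (f p) (fderiv ℝ g p w) + rI (fderiv ℝ f p w) (g p) := by
  have h1 : fderiv ℝ (fun z => (inner ℂ (f z) (g z) : ℂ)) p w
      = (inner ℂ (f p) (fderiv ℝ g p w) : ℂ) + (inner ℂ (fderiv ℝ f p w) (g p) : ℂ) :=
    fderiv_inner_apply ℂ hf hg w
  have h2 : (fun z => rI (f z) (g z))
      = fun z => Complex.reCLM ((inner ℂ (f z) (g z) : ℂ)) := rfl
  rw [h2, fderiv_comp' p Complex.reCLM.differentiableAt (hf.inner ℂ hg)]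
  rw [ContinuousLinearMap.comp_apply, ContinuousLinearMap.fderiv, h1]
  simp only [Complex.reCLM_apply, Complex.add_re, rI]

lemma differentiableAt_rI {f g : E n → E n} {p : E n} (hf : DifferentiableAt ℝ f p)
    (hg : DifferentiableAt ℝ g p) :
    DifferentiableAt ℝ (fun z => rI (f z) (g z)) p := by
  have h2 : (fun z => rI (f z) (g z))
      = fun z => Complex.reCLM ((inner ℂ (f z) (g z) : ℂ)) := rfl
  rw [h2]
  exact Complex.reCLM.differentiableAt.comp p (hf.inner ℂ hg)

lemma rI_four {x y : E n} (h : (inner ℂ x y : ℂ) = 0) :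
    rI x y = 0 ∧ rI x (J y) = 0 ∧ rI (J x) y = 0 ∧ rI (J x) (J y) = 0 := by
  refine ⟨?_, ?_, ?_, ?_⟩
  · rw [rI, h]; rfl
  · rw [rI, J, inner_smul_right, h, mul_zero]; rfl
  · rw [rI, J, inner_smul_left, h, mul_zero]; rfl
  · rw [rI_J_J, rI, h]; rfl

lemma DD_const_zero (u : CV n) (p : E n) : DD (fun _ => (0 : CV n)) u p = 0 := by
  rw [DD]
  have h1 : (fun z : E n => ((0 : CV n)).1) = fun _ => (0 : E n) := rfl
  have h2 : (fun z : E n => ((0 : CV n)).2) = fun _ => (0 : E n) := rfl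
  rw [h1, h2, fderiv_fun_const]
  simp [Prod.ext_iff]

@[simp] lemma gC_zero_left (w : CV n) : gC 0 w = 0 := by
  rw [gC]
  simp [Complex.ext_iff]

lemma differentiableAt_horR_field {nn f : E n → E n} {p : E n}
    (hn : DifferentiableAt ℝ nn p) (hf : DifferentiableAt ℝ f p) :
    DifferentiableAt ℝ (fun z => horR nn z (f z)) p := by
  have h : (fun z => horR nn z (f z))
      = fun z => f z - rI (nn z) (f z) • nn z - rI (J (nn z)) (f z) • J (nn z) := rfl
  rw [h]
  have d1 := differentiableAt_rI hn hf
  have d2 := differentiableAt_rI (differentiableAt_J hn) hf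
  exact (hf.sub (d1.smul hn)).sub (d2.smul (differentiableAt_J hn))

lemma fderiv_horR_field {nn f : E n → E n} {p : E n}
    (hn : DifferentiableAt ℝ nn p) (hf : DifferentiableAt ℝ f p)
    (h1 : rI (nn p) (f p) = 0) (h2 : rI (J (nn p)) (f p) = 0) (w : E n) :
    fderiv ℝ (fun z => horR nn z (f z)) p w
      = fderiv ℝ f p w
        - (rI (nn p) (fderiv ℝ f p w) + rI (fderiv ℝ nn p w) (f p)) • nn p
        - (rI (J (nn p)) (fderiv ℝ f p w) + rI (J (fderiv ℝ nn p w)) (f p)) • J (nn p) := by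
  have h : (fun z => horR nn z (f z))
      = fun z => f z - rI (nn z) (f z) • nn z - rI (J (nn z)) (f z) • J (nn z) := rfl
  have d1 := differentiableAt_rI hn hf
  have d2 := differentiableAt_rI (differentiableAt_J hn) hf
  rw [h, fderiv_fun_sub (f := fun z => f z - rI (nn z) (f z) • nn z) (g := fun z => rI (J (nn z)) (f z) • J (nn z)) ((hf.sub (d1.smul hn))) (d2.smul (differentiableAt_J hn)),
    fderiv_fun_sub (g := fun z => rI (nn z) (f z) • nn z) hf (d1.smul hn)]
  simp only [ContinuousLinearMap.coe_sub', Pi.sub_apply]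
  rw [fderiv_smul_apply d1 hn, fderiv_smul_apply d2 (differentiableAt_J hn),
    fderiv_rI_apply hn hf, fderiv_rI_apply (differentiableAt_J hn) hf,
    fderiv_J_apply hn, h1, h2]
  module

lemma sqrt2_facts : (Real.sqrt 2) * (Real.sqrt 2) = 2 ∧ (Real.sqrt 2) ≠ 0 := by
  constructor
  · exact Real.mul_self_sqrt (by norm_num)
  · positivity

lemma csmul_gC_anti (ν0 w : E n) (hn : rI ν0 ν0 = 1) :
    csmul (gC (w, J w) ((Real.sqrt 2)⁻¹ • ν0, -((Real.sqrt 2)⁻¹ • J ν0)))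
        (conjCV ((Real.sqrt 2)⁻¹ • ν0, -((Real.sqrt 2)⁻¹ • J ν0)))
      = (rI w ν0 • ν0 + rI w (J ν0) • J ν0,
         rI w ν0 • J ν0 - rI w (J ν0) • ν0) := by
  obtain ⟨h2, hne⟩ := sqrt2_facts
  rw [conjCV, csmul_eq]
  simp only [gC_re, gC_im, neg_neg]
  simp only [rI_smul_right, rI_neg_right, rI_J_J, rI_J_left, J_J]
  refine Prod.ext ?_ ?_ <;>
  · dsimp only
    match_scalars <;> field_simp <;> ring_nf <;> simp [Real.sq_sqrt (show (0:ℝ) ≤ 2 by norm_num)]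

lemma csmul_gC_holo (ν0 w : E n) (hn : rI ν0 ν0 = 1) :
    csmul (gC (w, -J w) (conjCV ((Real.sqrt 2)⁻¹ • ν0, -((Real.sqrt 2)⁻¹ • J ν0))))
        ((Real.sqrt 2)⁻¹ • ν0, -((Real.sqrt 2)⁻¹ • J ν0))
      = (rI w ν0 • ν0 + rI w (J ν0) • J ν0,
         -(rI w ν0 • J ν0) + rI w (J ν0) • ν0) := by
  obtain ⟨h2, hne⟩ := sqrt2_facts
  rw [conjCV, csmul_eq]
  simp only [gC_re, gC_im, neg_neg]
  simp only [rI_smul_right, rI_neg_right, rI_neg_left, rI_J_J, rI_J_left, J_J]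
  refine Prod.ext ?_ ?_ <;>
  · dsimp only
    match_scalars <;> field_simp <;> ring_nf <;> simp [Real.sq_sqrt (show (0:ℝ) ≤ 2 by norm_num)]



variable {M : Set (E n)} {ν : E n → E n}

lemma rI_nu_self {p : E n} (hsurf : IsHypersurface M ν) (hp : p ∈ M) :
    rI (ν p) (ν p) = 1 := by
  rw [rI_self, hsurf.2.1 p hp]; norm_num

/-- Key analytic lemma: the derivative of a function vanishing on `M` along
a tangent direction vanishes. -/
lemma tangent_fderiv_zero (hsurf : IsHypersurface M ν) {p : E n} (hp : p ∈ M)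
    {f : E n → ℝ} (hf : DifferentiableAt ℝ f p)
    {W : Set (E n)} (hW : IsOpen W) (hpW : p ∈ W) (hf0 : ∀ z ∈ M ∩ W, f z = 0)
    {X : E n} (hX : rI (ν p) X = 0) : fderiv ℝ f p X = 0 := by
  obtain ⟨hν, hnorm, hloc⟩ := hsurf
  obtain ⟨V, F, hV, hpV, hF, hMV, htang⟩ := hloc p hp
  have hpMV : p ∈ M ∩ V := ⟨hp, hpV⟩
  have hFc : ContDiffAt ℝ (⊤ : ℕ∞) F p := hF.contDiffAt (hV.mem_nhds hpV)
  have hFs : HasStrictFDerivAt F (fderiv ℝ F p) p :=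
    hFc.hasStrictFDerivAt (by simp)
  have hFp0 : F p = 0 := by
    have := hMV ▸ hpMV
    exact this.2
  have hnu : fderiv ℝ F p (ν p) ≠ 0 := by
    intro h
    have := (htang p hpMV (ν p)).1 h
    have h2 : rI (ν p) (ν p) = 0 := this
    rw [rI_nu_self ⟨hν, hnorm, hloc⟩ hp] at h2
    norm_num at h2
  have hsurj : (fderiv ℝ F p).range = ⊤ := by
    rw [LinearMap.range_eq_top]
    intro c
    refine ⟨(c / fderiv ℝ F p (ν p)) • ν p, ?_⟩
    rw [map_smul, smul_eq_mul, ContinuousLinearMap.coe_coe, div_mul_cancel₀ _ hnu]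
  have hXker : X ∈ (fderiv ℝ F p).ker := by
    rw [LinearMap.mem_ker]
    exact (htang p hpMV X).2 hX
  set ξ : (fderiv ℝ F p).ker := ⟨X, hXker⟩ with hξ
  set φ := hFs.implicitFunction F (fderiv ℝ F p) hsurj with hφ
  set c : ℝ → E n := fun t => φ (F p) (t • ξ) with hc
  have hc0 : c 0 = p := by
    rw [hc]; simp only [zero_smul]
    exact hFs.implicitFunction_apply_image hsurj
  -- the curve has derivative X at 0
  have hlin : HasDerivAt (fun t : ℝ => t • ξ) ξ 0 := by
    simpa using (hasDerivAt_id (0:ℝ)).smul_const ξ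
  have himp := (hFs.to_implicitFunction hsurj).hasFDerivAt
  have h00 : (fun t : ℝ => t • ξ) 0 = 0 := by simp
  have himp' : HasFDerivAt (φ (F p))
      ((fderiv ℝ F p).ker).subtypeL ((fun t : ℝ => t • ξ) 0) := by
    rw [h00]; exact himp
  have hcd : HasDerivAt c X 0 := by
    have h := himp'.comp_hasDerivAt 0 hlin
    exact h
  -- eventually, F (c t) = F p
  have hFt : ∀ᶠ t in nhds (0:ℝ), F (c t) = F p := by
    have hev := hFs.map_implicitFunction_eq hsurj
    have htend : Filter.Tendsto (fun t : ℝ => (F p, t • ξ)) (nhds 0)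
        (nhds (F p, (0 : (fderiv ℝ F p).ker))) := by
      refine Filter.Tendsto.prodMk_nhds tendsto_const_nhds ?_
      have : Filter.Tendsto (fun t : ℝ => t • ξ) (nhds 0) (nhds ((0:ℝ) • ξ)) :=
        (continuous_id.smul continuous_const).tendsto 0
      simpa using this
    exact htend.eventually hev
  -- eventually, c t ∈ V ∩ W
  have hcVW : ∀ᶠ t in nhds (0:ℝ), c t ∈ V ∩ W := by
    have hcont : ContinuousAt c 0 := hcd.continuousAt
    have : V ∩ W ∈ nhds (c 0) := by
      rw [hc0]; exact (hV.inter hW).mem_nhds ⟨hpV, hpW⟩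
    exact hcont.eventually_mem this
  have hfc : ∀ᶠ t in nhds (0:ℝ), (f ∘ c) t = 0 := by
    filter_upwards [hFt, hcVW] with t h1 h2
    have hcM : c t ∈ M := by
      have : c t ∈ M ∩ V := by
        rw [hMV]
        exact ⟨h2.1, by rw [h1, hFp0]⟩
      exact this.1
    exact hf0 (c t) ⟨hcM, h2.2⟩
  have hg : HasDerivAt (f ∘ c) (fderiv ℝ f p X) 0 := by
    have hf' : HasFDerivAt f (fderiv ℝ f p) (c 0) := by rw [hc0]; exact hf.hasFDerivAt
    exact hf'.comp_hasDerivAt 0 hcd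
  have hzero : HasDerivAt (f ∘ c) 0 0 := by
    have : HasDerivAt (fun _ : ℝ => (0:ℝ)) 0 (0:ℝ) := hasDerivAt_const 0 0
    exact this.congr_of_eventuallyEq hfc
  exact hg.unique hzero

lemma weingarten_symm (hsurf : IsHypersurface M ν) {p : E n} (hp : p ∈ M)
    {a b : E n} (ha : rI (ν p) a = 0) (hb : rI (ν p) b = 0) :
    rI (fderiv ℝ ν p a) b = rI (fderiv ℝ ν p b) a := by
  obtain ⟨V, F, hV, hpV, hF, hMV, htang⟩ := hsurf.2.2 p hp
  have hν : ContDiff ℝ (⊤ : ℕ∞) ν := hsurf.1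
  have hpMV : p ∈ M ∩ V := ⟨hp, hpV⟩
  have hνd : Differentiable ℝ ν := hν.differentiable (by simp)
  have hG : ContDiffOn ℝ (⊤ : ℕ∞) (fderiv ℝ F) V :=
    hF.fderiv_of_isOpen hV (by simp)
  have hGd : DifferentiableAt ℝ (fderiv ℝ F) p :=
    (hG.differentiableOn (by simp)).differentiableAt (hV.mem_nhds hpV)
  have hFc : ContDiffAt ℝ (⊤ : ℕ∞) F p := hF.contDiffAt (hV.mem_nhds hpV)
  have hsymm : IsSymmSndFDerivAt ℝ F p :=
    hFc.isSymmSndFDerivAt (by rw [minSmoothness_of_isRCLikeNormedField]; exact WithTop.coe_le_coe.mpr le_top)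
  have hnu : fderiv ℝ F p (ν p) ≠ 0 := by
    intro h
    have h2 : rI (ν p) (ν p) = 0 := (htang p hpMV (ν p)).1 h
    rw [rI_nu_self hsurf hp] at h2
    norm_num at h2
  set lam : E n → ℝ := fun z => fderiv ℝ F z (ν z) with hlam
  have hlamd : DifferentiableAt ℝ lam p := hGd.clm_apply (hνd p)
  have hkey : ∀ w : E n, ∀ z ∈ M ∩ V, rI (ν z) w * lam z - fderiv ℝ F z w = 0 := by
    intro w z hz
    have hmem : rI (ν z) (w - rI (ν z) w • ν z) = 0 := by
      rw [rI_sub_right, rI_smul_right, rI_nu_self hsurf hz.1]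
      ring
    have h1 : fderiv ℝ F z (w - rI (ν z) w • ν z) = 0 := (htang z hz _).2 hmem
    rw [map_sub, map_smul, smul_eq_mul] at h1
    simp only [hlam]
    linarith
  have hder : ∀ w d : E n, rI (ν p) d = 0 → rI (ν p) w = 0 →
      rI (fderiv ℝ ν p d) w * lam p = (fderiv ℝ (fderiv ℝ F) p d) w := by
    intro w d hd hw
    have hwr : DifferentiableAt ℝ (fun z => rI (ν z) w) p :=
      differentiableAt_rI (hνd p) (differentiableAt_const w)
    have hclm : DifferentiableAt ℝ (fun z => fderiv ℝ F z w) p :=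
      hGd.clm_apply (differentiableAt_const w)
    have hmul : DifferentiableAt ℝ (fun z => rI (ν z) w * lam z) p := hwr.mul hlamd
    have h0 : fderiv ℝ (fun z => rI (ν z) w * lam z - fderiv ℝ F z w) p d = 0 :=
      tangent_fderiv_zero hsurf hp (hmul.sub hclm) hV hpV (hkey w) hd
    rw [fderiv_fun_sub hmul hclm] at h0
    have h1 : fderiv ℝ (fun z => rI (ν z) w * lam z) p d
        = rI (fderiv ℝ ν p d) w * lam p := by
      rw [fderiv_fun_mul hwr hlamd]
      have h2 : fderiv ℝ (fun z => rI (ν z) w) p d = rI (fderiv ℝ ν p d) w := by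
        rw [fderiv_rI_apply (hνd p) (differentiableAt_const w)]
        rw [fderiv_fun_const]
        simp
      simp only [ContinuousLinearMap.add_apply, ContinuousLinearMap.coe_smul',
        Pi.smul_apply, smul_eq_mul, h2]
      rw [hw]
      ring
    have h3 : fderiv ℝ (fun z => fderiv ℝ F z w) p d = (fderiv ℝ (fderiv ℝ F) p d) w := by
      rw [fderiv_clm_apply hGd (differentiableAt_const w)]
      simp
    simp only [ContinuousLinearMap.coe_sub', Pi.sub_apply] at h0
    rw [h1, h3] at h0
    linarith
  have hab := hder b a ha hb
  have hba := hder a b hb ha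
  rw [hsymm a b] at hab
  rw [← hba] at hab
  exact mul_right_cancel₀ hnu hab

lemma DD_pair (f g : E n → E n) (u : CV n) (p : E n) :
    DD (fun z => (f z, g z)) u p
      = (fderiv ℝ f p u.1 - fderiv ℝ g p u.2, fderiv ℝ f p u.2 + fderiv ℝ g p u.1) := rfl

lemma key_orth (hsurf : IsHypersurface M ν) {p : E n} (hp : p ∈ M)
    {f : E n → E n} (hfd : Differentiable ℝ f)
    (horth : ∀ z ∈ M, (inner ℂ (ν z) (f z) : ℂ) = 0)
    {w : E n} (hw : rI (ν p) w = 0) :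
    rI (ν p) (fderiv ℝ f p w) = - rI (fderiv ℝ ν p w) (f p)
      ∧ rI (J (ν p)) (fderiv ℝ f p w) = rI (fderiv ℝ ν p w) (J (f p)) := by
  have hνd : Differentiable ℝ ν := hsurf.1.differentiable (by simp)
  constructor
  · have h0 : fderiv ℝ (fun z => rI (ν z) (f z)) p w = 0 :=
      tangent_fderiv_zero hsurf hp (differentiableAt_rI (hνd p) (hfd p)) isOpen_univ
        (Set.mem_univ p) (fun z hz => (rI_four (horth z hz.1)).1) hw
    rw [fderiv_rI_apply (hνd p) (hfd p)] at h0
    linarith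
  · have h0 : fderiv ℝ (fun z => rI (J (ν z)) (f z)) p w = 0 :=
      tangent_fderiv_zero hsurf hp
        (differentiableAt_rI (differentiableAt_J (hνd p)) (hfd p)) isOpen_univ
        (Set.mem_univ p) (fun z hz => (rI_four (horth z hz.1)).2.2.1) hw
    rw [fderiv_rI_apply (differentiableAt_J (hνd p)) (hfd p), fderiv_J_apply (hνd p)] at h0
    have h1 := rI_J_left (fderiv ℝ ν p w) (f p)
    linarith

lemma fderiv_horR_tangent (hsurf : IsHypersurface M ν) {p : E n} (hp : p ∈ M)
    {f : E n → E n} (hfd : Differentiable ℝ f)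
    (horth : ∀ z ∈ M, (inner ℂ (ν z) (f z) : ℂ) = 0)
    {w : E n} (hw : rI (ν p) w = 0) :
    fderiv ℝ (fun z => horR ν z (f z)) p w = fderiv ℝ f p w := by
  have hνd : Differentiable ℝ ν := hsurf.1.differentiable (by simp)
  have h1 := (rI_four (horth p hp)).1
  have h2 := (rI_four (horth p hp)).2.2.1
  rw [fderiv_horR_field (hνd p) (hfd p) h1 h2 w]
  obtain ⟨k1, k2⟩ := key_orth hsurf hp hfd horth hw
  rw [k1, k2, rI_J_left]
  simp

lemma nabla_anti (hsurf : IsHypersurface M ν) {p : E n} (hp : p ∈ M)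
    {Yf : E n → E n} (hYs : ContDiff ℝ (⊤ : ℕ∞) Yf)
    (horth : ∀ z ∈ M, (inner ℂ (ν z) (Yf z) : ℂ) = 0)
    {u : CV n} (hu1 : rI (ν p) u.1 = 0) (hu2 : rI (ν p) u.2 = 0)
    {A' : E n} (hA' : A' = fderiv ℝ Yf p u.1 - J (fderiv ℝ Yf p u.2)) :
    nabla ν (fun w => (Yf w, J (Yf w))) u p
      = (A' - rI A' (ν p) • ν p - rI A' (J (ν p)) • J (ν p),
         J A' - rI A' (ν p) • J (ν p) + rI A' (J (ν p)) • ν p) := by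
  have hνd : Differentiable ℝ ν := hsurf.1.differentiable (by simp)
  have hYd : Differentiable ℝ Yf := hYs.differentiable (by simp)
  have hhd : DifferentiableAt ℝ (fun z => horR ν z (Yf z)) p :=
    differentiableAt_horR_field (hνd p) (hYd p)
  simp only [nabla]
  have e1 : (fun z => PiH ν z (Yf z, J (Yf z))) = fun _ => (0 : CV n) :=
    funext fun z => PiH_anti ν z (Yf z)
  have e2 : (fun z => PiHb ν z (Yf z, J (Yf z)))
      = fun z => (horR ν z (Yf z), J (horR ν z (Yf z))) :=
    funext fun z => PiHb_anti ν z (Yf z)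
  rw [e1, e2, DD_const_zero, gC_zero_left, csmul_zero_left, sub_zero, zero_add]
  have eDD : DD (fun z => (horR ν z (Yf z), J (horR ν z (Yf z)))) u p = (A', J A') := by
    rw [DD_pair]
    rw [fderiv_J_apply hhd u.2, fderiv_J_apply hhd u.1,
      fderiv_horR_tangent hsurf hp hYd horth hu1,
      fderiv_horR_tangent hsurf hp hYd horth hu2, hA']
    refine Prod.ext ?_ ?_
    · rfl
    · show fderiv ℝ Yf p u.2 + J (fderiv ℝ Yf p u.1)
        = J (fderiv ℝ Yf p u.1 - J (fderiv ℝ Yf p u.2))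
      simp only [J_sub, J_J]
      module
  rw [eDD]
  have d1 : DifferentiableAt ℝ (fun z => rI (Yf z) (J (ν z))) p :=
    differentiableAt_rI (hYd p) (differentiableAt_J (hνd p))
  have d2 : DifferentiableAt ℝ (fun z => rI (Yf z) (ν z)) p :=
    differentiableAt_rI (hYd p) (hνd p)
  have e3 : (fun z => gC ((Yf z, J (Yf z)) : CV n) (TF ν z))
      = fun z => ((rI (Yf z) (J (ν z)) : ℝ) : ℂ) + ((rI (Yf z) (ν z) : ℝ) : ℂ) * Complex.I := by
    funext z
    rw [TF, gC]
    simp only [rI_zero_right, sub_zero, zero_add, rI_J_J]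
  rw [e3]
  have hz1 : fderiv ℝ (fun z => rI (Yf z) (J (ν z))) p u.1 = 0 :=
    tangent_fderiv_zero hsurf hp d1 isOpen_univ (Set.mem_univ p)
      (fun z hz => by rw [rI_symm]; exact (rI_four (horth z hz.1)).2.2.1) hu1
  have hz2 : fderiv ℝ (fun z => rI (Yf z) (J (ν z))) p u.2 = 0 :=
    tangent_fderiv_zero hsurf hp d1 isOpen_univ (Set.mem_univ p)
      (fun z hz => by rw [rI_symm]; exact (rI_four (horth z hz.1)).2.2.1) hu2
  have hz3 : fderiv ℝ (fun z => rI (Yf z) (ν z)) p u.1 = 0 :=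
    tangent_fderiv_zero hsurf hp d2 isOpen_univ (Set.mem_univ p)
      (fun z hz => by rw [rI_symm]; exact (rI_four (horth z hz.1)).1) hu1
  have hz4 : fderiv ℝ (fun z => rI (Yf z) (ν z)) p u.2 = 0 :=
    tangent_fderiv_zero hsurf hp d2 isOpen_univ (Set.mem_univ p)
      (fun z hz => by rw [rI_symm]; exact (rI_four (horth z hz.1)).1) hu2
  have hdC : dC (fun z => ((rI (Yf z) (J (ν z)) : ℝ) : ℂ)
      + ((rI (Yf z) (ν z) : ℝ) : ℂ) * Complex.I) u p = 0 := by
    rw [dC, dC_reim d1 d2 u.1, dC_reim d1 d2 u.2, hz1, hz2, hz3, hz4]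
    simp
  rw [hdC, csmul_zero_left, add_zero]
  rw [NF, csmul_gC_anti (ν p) A' (rI_nu_self hsurf hp)]
  refine Prod.ext ?_ ?_
  · show A' - (rI A' (ν p) • ν p + rI A' (J (ν p)) • J (ν p)) = _
    dsimp only
    module
  · show J A' - (rI A' (ν p) • J (ν p) - rI A' (J (ν p)) • ν p) = _
    dsimp only
    module

lemma nabla_holo (hsurf : IsHypersurface M ν) {p : E n} (hp : p ∈ M)
    {Xf : E n → E n} (hXs : ContDiff ℝ (⊤ : ℕ∞) Xf)
    (horth : ∀ z ∈ M, (inner ℂ (ν z) (Xf z) : ℂ) = 0)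
    {u : CV n} (hu1 : rI (ν p) u.1 = 0) (hu2 : rI (ν p) u.2 = 0)
    {B' : E n} (hB' : B' = fderiv ℝ Xf p u.1 + J (fderiv ℝ Xf p u.2)) :
    nabla ν (fun w => (Xf w, -J (Xf w))) u p
      = (B' - rI B' (ν p) • ν p - rI B' (J (ν p)) • J (ν p),
         -J B' + rI B' (ν p) • J (ν p) - rI B' (J (ν p)) • ν p) := by
  have hνd : Differentiable ℝ ν := hsurf.1.differentiable (by simp)
  have hXd : Differentiable ℝ Xf := hXs.differentiable (by simp)
  have hhd : DifferentiableAt ℝ (fun z => horR ν z (Xf z)) p :=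
    differentiableAt_horR_field (hνd p) (hXd p)
  simp only [nabla]
  have e1 : (fun z => PiHb ν z (Xf z, -J (Xf z))) = fun _ => (0 : CV n) :=
    funext fun z => PiHb_holo ν z (Xf z)
  have e2 : (fun z => PiH ν z (Xf z, -J (Xf z)))
      = fun z => (horR ν z (Xf z), -J (horR ν z (Xf z))) :=
    funext fun z => PiH_holo ν z (Xf z)
  rw [e1, e2, DD_const_zero, gC_zero_left, csmul_zero_left, sub_zero, add_zero]
  have eDD : DD (fun z => (horR ν z (Xf z), -J (horR ν z (Xf z)))) u p = (B', -J B') := by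
    rw [DD_pair]
    have hneg : ∀ w : E n, fderiv ℝ (fun z => -J (horR ν z (Xf z))) p w
        = -J (fderiv ℝ (fun z => horR ν z (Xf z)) p w) := by
      intro w
      have : (fun z => -J (horR ν z (Xf z))) = fun z => -(J (horR ν z (Xf z))) := rfl
      rw [this, fderiv_fun_neg]
      simp only [ContinuousLinearMap.neg_apply]
      rw [fderiv_J_apply hhd]
    rw [hneg u.2, hneg u.1,
      fderiv_horR_tangent hsurf hp hXd horth hu1,
      fderiv_horR_tangent hsurf hp hXd horth hu2, hB']
    refine Prod.ext ?_ ?_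
    · show fderiv ℝ Xf p u.1 - -J (fderiv ℝ Xf p u.2)
        = fderiv ℝ Xf p u.1 + J (fderiv ℝ Xf p u.2)
      module
    · show fderiv ℝ Xf p u.2 + -J (fderiv ℝ Xf p u.1)
        = -J (fderiv ℝ Xf p u.1 + J (fderiv ℝ Xf p u.2))
      simp only [J_add, J_J]
      module
  rw [eDD]
  have d1 : DifferentiableAt ℝ (fun z => rI (Xf z) (J (ν z))) p :=
    differentiableAt_rI (hXd p) (differentiableAt_J (hνd p))
  have d2 : DifferentiableAt ℝ (fun z => -rI (Xf z) (ν z)) p :=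
    (differentiableAt_rI (hXd p) (hνd p)).neg
  have e3 : (fun z => gC ((Xf z, -J (Xf z)) : CV n) (TF ν z))
      = fun z => ((rI (Xf z) (J (ν z)) : ℝ) : ℂ) + ((-rI (Xf z) (ν z) : ℝ) : ℂ) * Complex.I := by
    funext z
    rw [TF, gC]
    simp only [rI_zero_right, sub_zero, zero_add, rI_neg_left, rI_J_J]
  rw [e3]
  have hz1 : fderiv ℝ (fun z => rI (Xf z) (J (ν z))) p u.1 = 0 :=
    tangent_fderiv_zero hsurf hp d1 isOpen_univ (Set.mem_univ p)
      (fun z hz => by rw [rI_symm]; exact (rI_four (horth z hz.1)).2.2.1) hu1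
  have hz2 : fderiv ℝ (fun z => rI (Xf z) (J (ν z))) p u.2 = 0 :=
    tangent_fderiv_zero hsurf hp d1 isOpen_univ (Set.mem_univ p)
      (fun z hz => by rw [rI_symm]; exact (rI_four (horth z hz.1)).2.2.1) hu2
  have hz3 : fderiv ℝ (fun z => -rI (Xf z) (ν z)) p u.1 = 0 :=
    tangent_fderiv_zero hsurf hp d2 isOpen_univ (Set.mem_univ p)
      (fun z hz => by rw [rI_symm (Xf z) (ν z)]; rw [(rI_four (horth z hz.1)).1, neg_zero]) hu1
  have hz4 : fderiv ℝ (fun z => -rI (Xf z) (ν z)) p u.2 = 0 :=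
    tangent_fderiv_zero hsurf hp d2 isOpen_univ (Set.mem_univ p)
      (fun z hz => by rw [rI_symm (Xf z) (ν z)]; rw [(rI_four (horth z hz.1)).1, neg_zero]) hu2
  have hdC : dC (fun z => ((rI (Xf z) (J (ν z)) : ℝ) : ℂ)
      + ((-rI (Xf z) (ν z) : ℝ) : ℂ) * Complex.I) u p = 0 := by
    rw [dC, dC_reim d1 d2 u.1, dC_reim d1 d2 u.2, hz1, hz2, hz3, hz4]
    simp
  rw [hdC, csmul_zero_left, add_zero]
  rw [NF, csmul_gC_holo (ν p) B' (rI_nu_self hsurf hp)]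
  refine Prod.ext ?_ ?_
  · show B' - (rI B' (ν p) • ν p + rI B' (J (ν p)) • J (ν p)) = _
    dsimp only
    module
  · show -J B' - (-(rI B' (ν p) • J (ν p)) + rI B' (J (ν p)) • ν p) = _
    dsimp only
    module


end Aux

open Aux in
theorem stmt9 {n : ℕ} (M : Set (E n)) (ν : E n → E n)
    (hsurf : IsHypersurface M ν)
    (U V : E n → CV n) (hU : IsHoloField M ν U) (hV : IsHoloField M ν V) :
    ∀ p ∈ M, Tor ν U (conjF V) p = csmul (-(gC (bracket U (conjF V) p) (TF ν p))) (TF ν p) := by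

  intro p hp
  obtain ⟨hXs, hU2, hUorth⟩ := hU
  obtain ⟨hYs, hV2, hVorth⟩ := hV
  have hνd : Differentiable ℝ ν := hsurf.1.differentiable (by simp)
  have hXd : Differentiable ℝ (fun z => (U z).1) := hXs.differentiable (by simp)
  have hYd : Differentiable ℝ (fun z => (V z).1) := hYs.differentiable (by simp)
  have hXo := rI_four (hUorth p hp)
  have hYo := rI_four (hVorth p hp)
  have hVe : conjF V = fun z => ((V z).1, J ((V z).1)) := funext fun z => by
    refine Prod.ext rfl ?_
    show -(V z).2 = J ((V z).1)
    rw [hV2 z, neg_neg]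
  have hUe : U = fun z => ((U z).1, -J ((U z).1)) := funext fun z => Prod.ext rfl (hU2 z)
  have hu1 : rI (ν p) ((U p).1) = 0 := hXo.1
  have hu2 : rI (ν p) ((U p).2) = 0 := by rw [hU2 p, rI_neg_right, hXo.2.1, neg_zero]
  have hv1 : rI (ν p) ((conjF V p).1) = 0 := hYo.1
  have hv2 : rI (ν p) ((conjF V p).2) = 0 := by
    show rI (ν p) (-(V p).2) = 0
    rw [hV2 p, neg_neg, hYo.2.1]
  have e1v : ((conjF V p).1) = (V p).1 := rfl
  have e2v : ((conjF V p).2) = J ((V p).1) := by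
    show -(V p).2 = J ((V p).1)
    rw [hV2 p, neg_neg]
  -- nabla computations
  have hA : (fderiv ℝ (fun z => (V z).1) p ((U p).1) + J (fderiv ℝ (fun z => (V z).1) p (J ((U p).1)))) = fderiv ℝ (fun z => (V z).1) p ((U p).1)
      - J (fderiv ℝ (fun z => (V z).1) p ((U p).2)) := by
    rw [hU2 p, map_neg, J_neg, sub_neg_eq_add]
  have hT1 : nabla ν (conjF V) (U p) p
      = ((fderiv ℝ (fun z => (V z).1) p ((U p).1) + J (fderiv ℝ (fun z => (V z).1) p (J ((U p).1)))) - rI (fderiv ℝ (fun z => (V z).1) p ((U p).1) + J (fderiv ℝ (fun z => (V z).1) p (J ((U p).1)))) (ν p) • ν p - rI (fderiv ℝ (fun z => (V z).1) p ((U p).1) + J (fderiv ℝ (fun z => (V z).1) p (J ((U p).1)))) (J (ν p)) • J (ν p),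
         J (fderiv ℝ (fun z => (V z).1) p ((U p).1) + J (fderiv ℝ (fun z => (V z).1) p (J ((U p).1)))) - rI (fderiv ℝ (fun z => (V z).1) p ((U p).1) + J (fderiv ℝ (fun z => (V z).1) p (J ((U p).1)))) (ν p) • J (ν p) + rI (fderiv ℝ (fun z => (V z).1) p ((U p).1) + J (fderiv ℝ (fun z => (V z).1) p (J ((U p).1)))) (J (ν p)) • ν p) := by
    conv_lhs => rw [hVe]
    exact nabla_anti (Yf := fun z => (V z).1) hsurf hp hYs hVorth hu1 hu2 hA
  have hB : (fderiv ℝ (fun z => (U z).1) p ((V p).1) + J (fderiv ℝ (fun z => (U z).1) p (J ((V p).1)))) = fderiv ℝ (fun z => (U z).1) p ((conjF V p).1)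
      + J (fderiv ℝ (fun z => (U z).1) p ((conjF V p).2)) := by
    rw [e1v, e2v]
  have hT2 : nabla ν U (conjF V p) p
      = ((fderiv ℝ (fun z => (U z).1) p ((V p).1) + J (fderiv ℝ (fun z => (U z).1) p (J ((V p).1)))) - rI (fderiv ℝ (fun z => (U z).1) p ((V p).1) + J (fderiv ℝ (fun z => (U z).1) p (J ((V p).1)))) (ν p) • ν p - rI (fderiv ℝ (fun z => (U z).1) p ((V p).1) + J (fderiv ℝ (fun z => (U z).1) p (J ((V p).1)))) (J (ν p)) • J (ν p),
         -J (fderiv ℝ (fun z => (U z).1) p ((V p).1) + J (fderiv ℝ (fun z => (U z).1) p (J ((V p).1)))) + rI (fderiv ℝ (fun z => (U z).1) p ((V p).1) + J (fderiv ℝ (fun z => (U z).1) p (J ((V p).1)))) (ν p) • J (ν p) - rI (fderiv ℝ (fun z => (U z).1) p ((V p).1) + J (fderiv ℝ (fun z => (U z).1) p (J ((V p).1)))) (J (ν p)) • ν p) := by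
    conv_lhs => rw [hUe]
    exact nabla_holo (Xf := fun z => (U z).1) hsurf hp hXs hUorth hv1 hv2 hB
  -- bracket
  have dDV : DD (conjF V) (U p) p = ((fderiv ℝ (fun z => (V z).1) p ((U p).1) + J (fderiv ℝ (fun z => (V z).1) p (J ((U p).1)))), J (fderiv ℝ (fun z => (V z).1) p ((U p).1) + J (fderiv ℝ (fun z => (V z).1) p (J ((U p).1))))) := by
    conv_lhs => rw [hVe]
    rw [DD_pair]
    refine Prod.ext ?_ ?_
    · show fderiv ℝ (fun z => (V z).1) p ((U p).1)
        - fderiv ℝ (fun z => J ((V z).1)) p ((U p).2) = (fderiv ℝ (fun z => (V z).1) p ((U p).1) + J (fderiv ℝ (fun z => (V z).1) p (J ((U p).1))))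
      rw [fderiv_J_apply (hYd p), hU2 p, map_neg, J_neg, sub_neg_eq_add]
    · show fderiv ℝ (fun z => (V z).1) p ((U p).2)
        + fderiv ℝ (fun z => J ((V z).1)) p ((U p).1) = J (fderiv ℝ (fun z => (V z).1) p ((U p).1) + J (fderiv ℝ (fun z => (V z).1) p (J ((U p).1))))
      rw [fderiv_J_apply (hYd p), hU2 p, map_neg]
      simp only [J_add, J_J]
      module
  have hneg : ∀ w : E n, fderiv ℝ (fun z => -J ((U z).1)) p w
      = -J (fderiv ℝ (fun z => (U z).1) p w) := by
    intro w
    have hre : (fun z => -J ((U z).1)) = fun z => -(J ((U z).1)) := rfl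
    rw [hre, fderiv_fun_neg]
    simp only [ContinuousLinearMap.neg_apply]
    rw [fderiv_J_apply (hXd p)]
  have dDU : DD U (conjF V p) p = ((fderiv ℝ (fun z => (U z).1) p ((V p).1) + J (fderiv ℝ (fun z => (U z).1) p (J ((V p).1)))), -J (fderiv ℝ (fun z => (U z).1) p ((V p).1) + J (fderiv ℝ (fun z => (U z).1) p (J ((V p).1))))) := by
    conv_lhs => rw [hUe]
    rw [DD_pair]
    refine Prod.ext ?_ ?_
    · show fderiv ℝ (fun z => (U z).1) p ((conjF V p).1)
        - fderiv ℝ (fun z => -J ((U z).1)) p ((conjF V p).2) = (fderiv ℝ (fun z => (U z).1) p ((V p).1) + J (fderiv ℝ (fun z => (U z).1) p (J ((V p).1))))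
      rw [hneg, e1v, e2v, sub_neg_eq_add]
    · show fderiv ℝ (fun z => (U z).1) p ((conjF V p).2)
        + fderiv ℝ (fun z => -J ((U z).1)) p ((conjF V p).1) = -J (fderiv ℝ (fun z => (U z).1) p ((V p).1) + J (fderiv ℝ (fun z => (U z).1) p (J ((V p).1))))
      rw [hneg, e1v, e2v]
      simp only [J_add, J_J]
      module
  have hBr : bracket U (conjF V) p = ((fderiv ℝ (fun z => (V z).1) p ((U p).1) + J (fderiv ℝ (fun z => (V z).1) p (J ((U p).1)))) - (fderiv ℝ (fun z => (U z).1) p ((V p).1) + J (fderiv ℝ (fun z => (U z).1) p (J ((V p).1)))), J (fderiv ℝ (fun z => (V z).1) p ((U p).1) + J (fderiv ℝ (fun z => (V z).1) p (J ((U p).1)))) + J (fderiv ℝ (fun z => (U z).1) p ((V p).1) + J (fderiv ℝ (fun z => (U z).1) p (J ((V p).1))))) := by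
    rw [bracket, dDV, dDU, Prod.mk_sub_mk, sub_neg_eq_add]
  -- key identities
  have a1 : rI (ν p) (fderiv ℝ (fun z => (V z).1) p ((U p).1)) = - rI (fderiv ℝ ν p ((U p).1)) ((V p).1) :=
    (key_orth hsurf hp hYd hVorth hXo.1).1
  have a2 : rI (J (ν p)) (fderiv ℝ (fun z => (V z).1) p (J ((U p).1))) = rI (fderiv ℝ ν p (J ((U p).1))) (J ((V p).1)) :=
    (key_orth hsurf hp hYd hVorth hXo.2.1).2
  have a3 : rI (J (ν p)) (fderiv ℝ (fun z => (V z).1) p ((U p).1)) = rI (fderiv ℝ ν p ((U p).1)) (J ((V p).1)) :=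
    (key_orth hsurf hp hYd hVorth hXo.1).2
  have a4 : rI (ν p) (fderiv ℝ (fun z => (V z).1) p (J ((U p).1))) = - rI (fderiv ℝ ν p (J ((U p).1))) ((V p).1) :=
    (key_orth hsurf hp hYd hVorth hXo.2.1).1
  have b1 : rI (ν p) (fderiv ℝ (fun z => (U z).1) p ((V p).1)) = - rI (fderiv ℝ ν p ((V p).1)) ((U p).1) :=
    (key_orth hsurf hp hXd hUorth hYo.1).1
  have b2 : rI (J (ν p)) (fderiv ℝ (fun z => (U z).1) p (J ((V p).1))) = rI (fderiv ℝ ν p (J ((V p).1))) (J ((U p).1)) :=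
    (key_orth hsurf hp hXd hUorth hYo.2.1).2
  have b3 : rI (J (ν p)) (fderiv ℝ (fun z => (U z).1) p ((V p).1)) = rI (fderiv ℝ ν p ((V p).1)) (J ((U p).1)) :=
    (key_orth hsurf hp hXd hUorth hYo.1).2
  have b4 : rI (ν p) (fderiv ℝ (fun z => (U z).1) p (J ((V p).1))) = - rI (fderiv ℝ ν p (J ((V p).1))) ((U p).1) :=
    (key_orth hsurf hp hXd hUorth hYo.2.1).1
  have w1 : rI (fderiv ℝ ν p ((U p).1)) ((V p).1) = rI (fderiv ℝ ν p ((V p).1)) ((U p).1) :=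
    weingarten_symm hsurf hp hXo.1 hYo.1
  have w2 : rI (fderiv ℝ ν p (J ((U p).1))) (J ((V p).1)) = rI (fderiv ℝ ν p (J ((V p).1))) (J ((U p).1)) :=
    weingarten_symm hsurf hp hXo.2.1 hYo.2.1
  have w3 : rI (fderiv ℝ ν p ((U p).1)) (J ((V p).1)) = rI (fderiv ℝ ν p (J ((V p).1))) ((U p).1) :=
    weingarten_symm hsurf hp hXo.1 hYo.2.1
  have w4 : rI (fderiv ℝ ν p (J ((U p).1))) ((V p).1) = rI (fderiv ℝ ν p ((V p).1)) (J ((U p).1)) :=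
    weingarten_symm hsurf hp hXo.2.1 hYo.1
  have K1 : rI (fderiv ℝ (fun z => (V z).1) p ((U p).1) + J (fderiv ℝ (fun z => (V z).1) p (J ((U p).1)))) (ν p) = rI (fderiv ℝ (fun z => (U z).1) p ((V p).1) + J (fderiv ℝ (fun z => (U z).1) p (J ((V p).1)))) (ν p) := by
    rw [rI_add_left, rI_add_left,
      rI_symm (fderiv ℝ (fun z => (V z).1) p ((U p).1)) (ν p), rI_J_left (fderiv ℝ (fun z => (V z).1) p (J ((U p).1))) (ν p), rI_symm (fderiv ℝ (fun z => (V z).1) p (J ((U p).1))) (J (ν p)),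
      rI_symm (fderiv ℝ (fun z => (U z).1) p ((V p).1)) (ν p), rI_J_left (fderiv ℝ (fun z => (U z).1) p (J ((V p).1))) (ν p), rI_symm (fderiv ℝ (fun z => (U z).1) p (J ((V p).1))) (J (ν p)),
      a1, a2, b1, b2, w1, w2]
  have K2 : rI (fderiv ℝ (fun z => (V z).1) p ((U p).1) + J (fderiv ℝ (fun z => (V z).1) p (J ((U p).1)))) (J (ν p)) = - rI (fderiv ℝ (fun z => (U z).1) p ((V p).1) + J (fderiv ℝ (fun z => (U z).1) p (J ((V p).1)))) (J (ν p)) := by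
    rw [rI_add_left, rI_add_left, rI_J_J, rI_J_J,
      rI_symm (fderiv ℝ (fun z => (V z).1) p ((U p).1)) (J (ν p)), rI_symm (fderiv ℝ (fun z => (V z).1) p (J ((U p).1))) (ν p),
      rI_symm (fderiv ℝ (fun z => (U z).1) p ((V p).1)) (J (ν p)), rI_symm (fderiv ℝ (fun z => (U z).1) p (J ((V p).1))) (ν p),
      a3, a4, b3, b4, w3, w4]
    ring
  -- conclusion
  rw [Tor, hT1, hT2, hBr, TF, csmul_eq]
  simp only [Complex.neg_re, Complex.neg_im, gC_re, gC_im, rI_zero_right, sub_zero,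
    zero_add, smul_zero]
  have R1 : rI ((fderiv ℝ (fun z => (V z).1) p ((U p).1) + J (fderiv ℝ (fun z => (V z).1) p (J ((U p).1)))) - (fderiv ℝ (fun z => (U z).1) p ((V p).1) + J (fderiv ℝ (fun z => (U z).1) p (J ((V p).1))))) (J (ν p)) = rI (fderiv ℝ (fun z => (V z).1) p ((U p).1) + J (fderiv ℝ (fun z => (V z).1) p (J ((U p).1)))) (J (ν p)) - rI (fderiv ℝ (fun z => (U z).1) p ((V p).1) + J (fderiv ℝ (fun z => (U z).1) p (J ((V p).1)))) (J (ν p)) :=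
    rI_sub_left _ _ _
  have R2 : rI (J (fderiv ℝ (fun z => (V z).1) p ((U p).1) + J (fderiv ℝ (fun z => (V z).1) p (J ((U p).1)))) + J (fderiv ℝ (fun z => (U z).1) p ((V p).1) + J (fderiv ℝ (fun z => (U z).1) p (J ((V p).1))))) (J (ν p)) = rI (fderiv ℝ (fun z => (V z).1) p ((U p).1) + J (fderiv ℝ (fun z => (V z).1) p (J ((U p).1)))) (ν p) + rI (fderiv ℝ (fun z => (U z).1) p ((V p).1) + J (fderiv ℝ (fun z => (U z).1) p (J ((V p).1)))) (ν p) := by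
    rw [rI_add_left, rI_J_J, rI_J_J]
  rw [R1, R2, K1, K2]
  refine Prod.ext ?_ ?_ <;>
  · simp only [Prod.fst_sub, Prod.snd_sub]
    module
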